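/- Let U be a vector space over F_q with dim_{F_q} U = ns − δ, and let y_1,…,y_N with N = (m − w)δ be independent random vectors each uniformly distributed on U. Then the probability that the matrix with rows y_1,…,y_N has F_q-rank at most ns − 2δ is at most q^{(δ+1)(ns−2δ) − δ²(m−w)}. -/

import Mathlib

open Module Submodule

section AuxCB

variable {K V : Type*} [Field K] [AddCommGroup V] [Module K V] [FiniteDimensional K V]

/-- Any subspace of finrank ≤ k extends to one of finrank exactly k. -/
lemma aux_exists_between (P : Submodule K V) (k : ℕ) (h1 : finrank K P ≤ k)
    (h2 : k ≤ finrank K V) : ∃ W : Submodule K V, P ≤ W ∧ finrank K W = k := by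
  obtain ⟨j, hj⟩ := Nat.exists_eq_add_of_le h1
  induction j generalizing P with
  | zero => exact ⟨P, le_rfl, by omega⟩
  | succ j ih =>
    have hlt : finrank K P < finrank K V := by omega
    obtain ⟨x, hx⟩ := Submodule.exists_of_finrank_lt P hlt
    have hxP : x ∉ P := by simpa using hx 1 one_ne_zero
    have hx0 : x ≠ 0 := fun h => hxP (h ▸ P.zero_mem)
    have hinf : P ⊓ (K ∙ x) = ⊥ := by
      rw [eq_bot_iff]
      rintro v ⟨hvP, hvx⟩
      obtain ⟨r, rfl⟩ := mem_span_singleton.mp hvx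
      rcases eq_or_ne r 0 with rfl | hr
      · simp
      · exact absurd hvP (hx r hr)
    have hP' : finrank K ↥(P ⊔ (K ∙ x)) = finrank K P + 1 := by
      have h := Submodule.finrank_sup_add_finrank_inf_eq P (K ∙ x)
      rw [hinf, finrank_bot, finrank_span_singleton hx0] at h
      omega
    obtain ⟨W, hW1, hW2⟩ := ih (P ⊔ (K ∙ x)) (by omega) (by omega)
    exact ⟨W, le_trans le_sup_left hW1, hW2⟩

variable {K V : Type*} [Field K] [AddCommGroup V] [Module K V] [FiniteDimensional K V]
  [Fintype K]

lemma aux_span_eq (W : Submodule K V) {k : ℕ} (hW : finrank K W = k)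
    (b : Fin k → W) (hb : LinearIndependent K b) :
    span K (Set.range (W.subtype ∘ b)) = W := by
  apply Submodule.eq_of_le_of_finrank_le
  · rw [span_le]
    rintro _ ⟨i, rfl⟩
    exact (b i).2
  · rw [hW, finrank_span_eq_card (hb.map' W.subtype (ker_subtype W))]
    simp

lemma aux_card_subspaces (k : ℕ) (hk : k ≤ finrank K V) :
    Nat.card {W : Submodule K V // finrank K W = k}
      ≤ Fintype.card K ^ (k * (finrank K V - k + 1)) := by
  classical
  haveI : Finite V := Module.finite_of_finite K
  haveI : Fintype V := Fintype.ofFinite V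
  set Q := Fintype.card K with hQ
  have hQ2 : 2 ≤ Q := Fintype.one_lt_card
  set T := {W : Submodule K V // finrank K W = k} with hT
  haveI : Finite (Submodule K V) :=
    Finite.of_injective (fun W => (W : Set V)) SetLike.coe_injective
  -- injection from sigma type into linearly independent families in V
  have hinj : Function.Injective
      (fun p : Σ W : T, {b : Fin k → (W.1 : Submodule K V) // LinearIndependent K b} =>
        (⟨(p.1.1).subtype ∘ p.2.1, p.2.2.map' _ (ker_subtype p.1.1)⟩ :
          {b : Fin k → V // LinearIndependent K b})) := by
    rintro ⟨⟨W, hW⟩, b, hb⟩ ⟨⟨W', hW'⟩, b', hb'⟩ h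
    simp only [Subtype.mk.injEq] at h
    have hWW' : W = W' := by
      rw [← aux_span_eq W hW b hb, ← aux_span_eq W' hW' b' hb', h]
    subst hWW'
    have hbb' : b = b' := by
      funext i
      exact Subtype.ext (congrFun h i)
    subst hbb'
    rfl
  have hle := Nat.card_le_card_of_injective _ hinj
  have hcard_target : Nat.card {b : Fin k → V // LinearIndependent K b}
      ≤ Q ^ (finrank K V * k) := by
    calc Nat.card {b : Fin k → V // LinearIndependent K b}
        ≤ Nat.card (Fin k → V) := Nat.card_le_card_of_injective _ Subtype.val_injective
      _ = Q ^ (finrank K V * k) := by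
          rw [Nat.card_fun, Nat.card_eq_fintype_card (α := V),
            card_eq_pow_finrank (K := K) (V := V), Nat.card_eq_fintype_card, Fintype.card_fin,
            ← pow_mul]
  have hfiber : ∀ W : T,
      Nat.card {b : Fin k → (W.1 : Submodule K V) // LinearIndependent K b}
        = ∏ i : Fin k, (Q ^ k - Q ^ (i : ℕ)) := by
    intro W
    rw [card_linearIndependent (le_of_eq W.2.symm), W.2]
  have hsigma : Nat.card (Σ W : T, {b : Fin k → (W.1 : Submodule K V) // LinearIndependent K b})
      = Nat.card T * ∏ i : Fin k, (Q ^ k - Q ^ (i : ℕ)) := by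
    haveI : Fintype (Submodule K V) := Fintype.ofFinite _
    rw [Nat.card_eq_fintype_card, Fintype.card_sigma]
    simp only [← Nat.card_eq_fintype_card, hfiber]
    rw [Finset.sum_const, Nat.card_eq_fintype_card, smul_eq_mul, Finset.card_univ]
  have hprod : Q ^ ((k - 1) * k) ≤ ∏ i : Fin k, (Q ^ k - Q ^ (i : ℕ)) := by
    have : ∀ i : Fin k, Q ^ (k - 1) ≤ Q ^ k - Q ^ (i : ℕ) := by
      intro i
      have hk0 : 0 < k := i.pos
      have hik : (i : ℕ) < k := i.isLt
      have h1 : Q ^ (i : ℕ) ≤ Q ^ (k - 1) := Nat.pow_le_pow_right (by omega) (by omega)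
      have h2 : 2 * Q ^ (k - 1) ≤ Q ^ k := by
        calc 2 * Q ^ (k - 1) ≤ Q * Q ^ (k - 1) := by
              exact Nat.mul_le_mul_right _ hQ2
          _ = Q ^ k := by
              rw [← pow_succ']
              congr 1
              omega
      have h3 : Q ^ (i : ℕ) ≤ Q ^ k := Nat.pow_le_pow_right (by omega) (by omega)
      omega
    calc Q ^ ((k - 1) * k) = ∏ _i : Fin k, Q ^ (k - 1) := by
          rw [Finset.prod_const, ← pow_mul, Finset.card_univ, Fintype.card_fin]
      _ ≤ ∏ i : Fin k, (Q ^ k - Q ^ (i : ℕ)) := Finset.prod_le_prod' (fun i _ => this i)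
  have key : Nat.card T * Q ^ ((k - 1) * k) ≤ Q ^ (finrank K V * k) := by
    calc Nat.card T * Q ^ ((k - 1) * k)
        ≤ Nat.card T * ∏ i : Fin k, (Q ^ k - Q ^ (i : ℕ)) :=
          Nat.mul_le_mul_left _ hprod
      _ = Nat.card (Σ W : T, {b : Fin k → (W.1 : Submodule K V) // LinearIndependent K b}) :=
          hsigma.symm
      _ ≤ Nat.card {b : Fin k → V // LinearIndependent K b} := hle
      _ ≤ Q ^ (finrank K V * k) := hcard_target
  have hsplit : finrank K V * k = (k - 1) * k + k * (finrank K V - k + 1) := by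
    obtain ⟨d', hd'⟩ := Nat.exists_eq_add_of_le hk
    rw [hd']
    cases k with
    | zero => simp
    | succ k' =>
      simp only [Nat.succ_sub_one, Nat.add_sub_cancel_left]
      ring
  rw [hsplit, pow_add] at key
  rw [mul_comm (Nat.card T) (Q ^ ((k - 1) * k))] at key
  exact Nat.le_of_mul_le_mul_left key (Nat.pow_pos (by omega))

lemma aux_card_bad (k N : ℕ) (hk : k ≤ finrank K V) :
    Nat.card {y : Fin N → V // finrank K (span K (Set.range y)) ≤ k}
      ≤ Fintype.card K ^ (k * (finrank K V - k + 1)) * (Fintype.card K ^ k) ^ N := by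
  classical
  haveI : Finite V := Module.finite_of_finite K
  haveI : Fintype V := Fintype.ofFinite V
  haveI : Finite (Submodule K V) :=
    Finite.of_injective (fun W => (W : Set V)) SetLike.coe_injective
  haveI : Fintype (Submodule K V) := Fintype.ofFinite _
  set Q := Fintype.card K with hQ
  set T := {W : Submodule K V // finrank K W = k} with hT
  -- choose, for each bad `y`, a `k`-dimensional subspace containing its span
  have hex : ∀ y : {y : Fin N → V // finrank K (span K (Set.range y)) ≤ k},
      ∃ W : Submodule K V, span K (Set.range y.1) ≤ W ∧ finrank K W = k :=
    fun y => aux_exists_between _ k y.2 hk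
  choose Wof hWle hWrank using hex
  have hinj : Function.Injective
      (fun y : {y : Fin N → V // finrank K (span K (Set.range y)) ≤ k} =>
        (⟨⟨Wof y, hWrank y⟩, fun i => ⟨y.1 i, hWle y (subset_span ⟨i, rfl⟩)⟩⟩ :
          Σ W : T, (Fin N → (W.1 : Submodule K V)))) := by
    intro y y' h
    have := congrArg (fun p : Σ W : T, (Fin N → (W.1 : Submodule K V)) =>
      (fun i => ((p.2 i : V))) ) h
    exact Subtype.ext (funext fun i => congrFun this i)
  have hle := Nat.card_le_card_of_injective _ hinj
  have hcard_sigma : Nat.card (Σ W : T, (Fin N → (W.1 : Submodule K V)))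
      = Fintype.card T * (Q ^ k) ^ N := by
    rw [Nat.card_eq_fintype_card, Fintype.card_sigma]
    have : ∀ W : T, Fintype.card (Fin N → (W.1 : Submodule K V)) = (Q ^ k) ^ N := by
      intro W
      rw [Fintype.card_fun, Fintype.card_fin, card_eq_pow_finrank (K := K), W.2]
    simp only [this]
    rw [Finset.sum_const, smul_eq_mul, Finset.card_univ]
  have hT_card : Fintype.card T ≤ Q ^ (k * (finrank K V - k + 1)) := by
    rw [← Nat.card_eq_fintype_card]
    exact aux_card_subspaces k hk
  calc Nat.card {y : Fin N → V // finrank K (span K (Set.range y)) ≤ k}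
      ≤ Fintype.card T * (Q ^ k) ^ N := by rw [← hcard_sigma]; exact hle
    _ ≤ Q ^ (k * (finrank K V - k + 1)) * (Q ^ k) ^ N :=
        Nat.mul_le_mul_right _ hT_card


end AuxCB



/-- Combined failure-probability bound: if `dim_{F_q} U = ns − δ` and `y_1,…,y_N` with
`N = (m−w)δ` are independent uniform random vectors in `U`, then the probability that the
matrix with rows `y_1,…,y_N` has `F_q`-rank at most `ns − 2δ` is at most
`q^{(δ+1)(ns−2δ) − δ²(m−w)}`. -/
theorem stmt_14 (q n s m w δ : ℕ) (hq : IsPrimePow q) (hw : w < m) (hδ : 0 < δ)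
    (h2δ : 2 * δ ≤ n * s)
    (Fq : Type*) [Field Fq] [Fintype Fq] (hFq : Fintype.card Fq = q)
    (U : Type*) [AddCommGroup U] [Module Fq U] [FiniteDimensional Fq U]
    (hU : Module.finrank Fq U = n * s - δ)
    (N : ℕ) (hN : N = (m - w) * δ) :
    (Nat.card {y : Fin N → U //
          Module.finrank Fq ↥(Submodule.span Fq (Set.range y)) ≤ n * s - 2 * δ} : ℚ)
        / (Nat.card (Fin N → U) : ℚ)
      ≤ (q : ℚ) ^ ((((δ : ℤ) + 1) * ((n : ℤ) * (s : ℤ) - 2 * (δ : ℤ)))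
          - (δ : ℤ) ^ 2 * ((m : ℤ) - (w : ℤ))) := by
  classical
  haveI : Finite U := Module.finite_of_finite Fq
  haveI : Fintype U := Fintype.ofFinite U
  set k := n * s - 2 * δ with hk
  set d := finrank Fq U with hd
  have hq2 : 2 ≤ q := hFq ▸ Fintype.one_lt_card
  have hkd : k ≤ d := by omega
  have hdk1 : d - k + 1 = δ + 1 := by omega
  -- numerator bound
  have hnum : Nat.card {y : Fin N → U // finrank Fq (span Fq (Set.range y)) ≤ k}
      ≤ q ^ (k * (δ + 1) + k * N) := by
    have := aux_card_bad (K := Fq) (V := U) k N hkd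
    rw [hFq, ← hd, hdk1, ← pow_mul, ← pow_add] at this
    exact this
  -- denominator
  have hden : Nat.card (Fin N → U) = q ^ (d * N) := by
    rw [Nat.card_fun, Nat.card_eq_fintype_card (α := U),
      card_eq_pow_finrank (K := Fq) (V := U), hFq, Nat.card_eq_fintype_card,
      Fintype.card_fin, ← hd, ← pow_mul]
  have hqQ : (0 : ℚ) < (q : ℚ) := by exact_mod_cast Nat.lt_of_lt_of_le Nat.zero_lt_two hq2
  have hq0 : (q : ℚ) ≠ 0 := ne_of_gt hqQ
  rw [hden, Nat.cast_pow]
  have hpow : (0 : ℚ) < (q : ℚ) ^ (d * N) := by positivity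
  rw [div_le_iff₀ hpow]
  have h1 : (Nat.card {y : Fin N → U //
        finrank Fq (span Fq (Set.range y)) ≤ k} : ℚ) ≤ (q : ℚ) ^ (k * (δ + 1) + k * N) := by
    exact_mod_cast hnum
  refine h1.trans (le_of_eq ?_)
  rw [← zpow_natCast (q : ℚ) (k * (δ + 1) + k * N), ← zpow_natCast (q : ℚ) (d * N),
    ← zpow_add₀ hq0]
  congr 1
  have hkZ : (k : ℤ) = (n : ℤ) * s - 2 * δ := by
    rw [hk]; push_cast [Nat.cast_sub h2δ]; ring
  have hdZ : (d : ℤ) = (n : ℤ) * s - δ := by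
    rw [hU]; push_cast [Nat.cast_sub (by omega : δ ≤ n * s)]; ring
  have hNZ : (N : ℤ) = ((m : ℤ) - w) * δ := by
    rw [hN]; push_cast [Nat.cast_sub hw.le]; ring
  push_cast
  rw [hkZ, hdZ, hNZ]
  ring
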